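/- Let D₁, D₂ ⊆ [0,1] be sets each containing 0 and 1, let 0 ≤ α ≤ 1, and define S_α : D₁ × D₂ → [0,1] by S_α(u,v) := α·min(u,v) + (1−α)·uv. Then S_α is a bivariate subcopula, d(S_α) = α·d(M_{S_α}) where M_{S_α} is the restriction of M(u,v) = min(u,v) to D₁ × D₂, and if d(M_{S_α}) > 0 then the monotone dependence measure satisfies μ(S_α) = α. -/

import Mathlib

/-- A bivariate subcopula: `S : D₁ × D₂ → [0,1]` where `D₁, D₂ ⊆ [0,1]` each
contain `0` and `1`, with grounded/marginal boundary conditions and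
2-increasingness. -/
def IsSubcopula (D₁ D₂ : Set ℝ) (S : ℝ → ℝ → ℝ) : Prop :=
  D₁ ⊆ Set.Icc 0 1 ∧ D₂ ⊆ Set.Icc 0 1 ∧
  (0 : ℝ) ∈ D₁ ∧ (1 : ℝ) ∈ D₁ ∧ (0 : ℝ) ∈ D₂ ∧ (1 : ℝ) ∈ D₂ ∧
  (∀ u ∈ D₁, ∀ v ∈ D₂, S u v ∈ Set.Icc (0 : ℝ) 1) ∧
  (∀ u ∈ D₁, S u 0 = 0) ∧ (∀ v ∈ D₂, S 0 v = 0) ∧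
  (∀ u ∈ D₁, S u 1 = u) ∧ (∀ v ∈ D₂, S 1 v = v) ∧
  (∀ u₁ ∈ D₁, ∀ u₂ ∈ D₁, ∀ v₁ ∈ D₂, ∀ v₂ ∈ D₂, u₁ ≤ u₂ → v₁ ≤ v₂ →
    0 ≤ S u₂ v₂ - S u₂ v₁ - S u₁ v₂ + S u₁ v₁)

/-- `d(S) = sup{S(u,v) − uv} − sup{uv − S(u,v)}`, suprema over `D₁ × D₂`. -/
noncomputable def dval (D₁ D₂ : Set ℝ) (S : ℝ → ℝ → ℝ) : ℝ :=
  sSup {x : ℝ | ∃ u ∈ D₁, ∃ v ∈ D₂, x = S u v - u * v} -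
  sSup {x : ℝ | ∃ u ∈ D₁, ∃ v ∈ D₂, x = u * v - S u v}

/-- The monotone dependence measure `μ(S)`: `d(S)/d(M_S)` when `d(S) ≥ 0` and
`d(M_S) > 0`, `−d(S)/d(W_S)` when `d(S) ≤ 0` and `d(W_S) < 0`, and `0` in the
trivial case. -/
noncomputable def mu (D₁ D₂ : Set ℝ) (S : ℝ → ℝ → ℝ) : ℝ :=
  if 0 ≤ dval D₁ D₂ S ∧ 0 < dval D₁ D₂ (fun u v => min u v) then
    dval D₁ D₂ S / dval D₁ D₂ (fun u v => min u v)
  else if dval D₁ D₂ S ≤ 0 ∧ dval D₁ D₂ (fun u v => max (u + v - 1) 0) < 0 then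
    -(dval D₁ D₂ S / dval D₁ D₂ (fun u v => max (u + v - 1) 0))
  else 0


private lemma sup_zero_of (s : Set ℝ) (h0 : (0:ℝ) ∈ s) (hle : ∀ x ∈ s, x ≤ 0) : sSup s = 0 :=
  le_antisymm (Real.sSup_le hle (by norm_num)) (le_csSup ⟨0, hle⟩ h0)

private lemma sup_scale (a : ℝ) (ha : 0 ≤ a) (s : Set ℝ) :
    sSup ((fun x => a * x) '' s) = a * sSup s := by
  have := Real.sSup_smul_of_nonneg ha s
  rw [← Set.image_smul] at this
  simpa only [smul_eq_mul] using this

/-- For `S_α(u,v) = α·min(u,v) + (1−α)·uv` on any subcopula domain: `S_α` is a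
subcopula, `d(S_α) = α·d(M_{S_α})`, and `μ(S_α) = α` whenever `d(M_{S_α}) > 0`. -/
theorem convex_combination_M_Pi (D₁ D₂ : Set ℝ) (α : ℝ)
    (hD₁ : D₁ ⊆ Set.Icc 0 1) (hD₂ : D₂ ⊆ Set.Icc 0 1)
    (h01 : (0 : ℝ) ∈ D₁) (h11 : (1 : ℝ) ∈ D₁)
    (h02 : (0 : ℝ) ∈ D₂) (h12 : (1 : ℝ) ∈ D₂)
    (hα₀ : 0 ≤ α) (hα₁ : α ≤ 1) :
    IsSubcopula D₁ D₂ (fun u v => α * min u v + (1 - α) * (u * v)) ∧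
    dval D₁ D₂ (fun u v => α * min u v + (1 - α) * (u * v)) =
      α * dval D₁ D₂ (fun u v => min u v) ∧
    (0 < dval D₁ D₂ (fun u v => min u v) →
      mu D₁ D₂ (fun u v => α * min u v + (1 - α) * (u * v)) = α) := by
  have hmin : ∀ u ∈ D₁, ∀ v ∈ D₂, u * v ≤ min u v := by
    intro u hu v hv
    obtain ⟨hu0, hu1⟩ := hD₁ hu
    obtain ⟨hv0, hv1⟩ := hD₂ hv
    rcases le_total u v with h | h
    · rw [min_eq_left h]; nlinarith
    · rw [min_eq_right h]; nlinarith
  -- the sets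
  set Mset : Set ℝ := {x : ℝ | ∃ u ∈ D₁, ∃ v ∈ D₂, x = min u v - u * v} with hMset
  have hMne : (0:ℝ) ∈ Mset := ⟨0, h01, 0, h02, by norm_num⟩
  have hSset : {x : ℝ | ∃ u ∈ D₁, ∃ v ∈ D₂,
      x = (α * min u v + (1 - α) * (u * v)) - u * v} = (fun x => α * x) '' Mset := by
    ext x
    constructor
    · rintro ⟨u, hu, v, hv, rfl⟩
      exact ⟨min u v - u * v, ⟨u, hu, v, hv, rfl⟩, by ring⟩
    · rintro ⟨y, ⟨u, hu, v, hv, rfl⟩, rfl⟩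
      exact ⟨u, hu, v, hv, by ring⟩
  have hWS : sSup {x : ℝ | ∃ u ∈ D₁, ∃ v ∈ D₂,
      x = u * v - (α * min u v + (1 - α) * (u * v))} = 0 := by
    apply sup_zero_of
    · exact ⟨0, h01, 0, h02, by norm_num⟩
    · rintro x ⟨u, hu, v, hv, rfl⟩
      have := hmin u hu v hv
      nlinarith
  have hWM : sSup {x : ℝ | ∃ u ∈ D₁, ∃ v ∈ D₂, x = u * v - min u v} = 0 := by
    apply sup_zero_of
    · exact ⟨0, h01, 0, h02, by norm_num⟩
    · rintro x ⟨u, hu, v, hv, rfl⟩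
      have := hmin u hu v hv
      linarith
  have hdM : dval D₁ D₂ (fun u v => min u v) = sSup Mset := by
    simp only [dval, hWM, hMset, sub_zero]
  have hdS : dval D₁ D₂ (fun u v => α * min u v + (1 - α) * (u * v)) =
      α * dval D₁ D₂ (fun u v => min u v) := by
    simp only [dval, hWS, hWM, sub_zero]
    rw [hSset, sup_scale α hα₀]
  refine ⟨?_, hdS, ?_⟩
  · refine ⟨hD₁, hD₂, h01, h11, h02, h12, ?_, ?_, ?_, ?_, ?_, ?_⟩
    · intro u hu v hv
      obtain ⟨hu0, hu1⟩ := hD₁ hu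
      obtain ⟨hv0, hv1⟩ := hD₂ hv
      dsimp only
      constructor
      · have h1 : 0 ≤ min u v := le_min hu0 hv0
        have h2 : 0 ≤ u * v := mul_nonneg hu0 hv0
        nlinarith
      · have h1 : min u v ≤ 1 := min_le_of_left_le hu1
        have h2 : u * v ≤ 1 := by nlinarith
        nlinarith
    · intro u hu
      obtain ⟨hu0, _⟩ := hD₁ hu
      simp [min_eq_right hu0]
    · intro v hv
      obtain ⟨hv0, _⟩ := hD₂ hv
      simp [min_eq_left hv0]
    · intro u hu
      obtain ⟨_, hu1⟩ := hD₁ hu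
      simp [min_eq_left hu1]; ring
    · intro v hv
      obtain ⟨_, hv1⟩ := hD₂ hv
      simp [min_eq_right hv1]; ring
    · intro u₁ hu₁ u₂ hu₂ v₁ hv₁ v₂ hv₂ hu hv
      dsimp only
      have hminrect : 0 ≤ min u₂ v₂ - min u₂ v₁ - min u₁ v₂ + min u₁ v₁ := by
        simp only [min_def]
        split_ifs <;> linarith
      have hprod : 0 ≤ (u₂ - u₁) * (v₂ - v₁) := by nlinarith
      nlinarith
  · intro hM
    have hS0 : 0 ≤ dval D₁ D₂ (fun u v => α * min u v + (1 - α) * (u * v)) := by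
      rw [hdS]; positivity
    rw [mu, if_pos ⟨hS0, hM⟩, hdS, mul_div_assoc, div_self (ne_of_gt hM), mul_one]
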